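/- Let θ > 0, D = 2 and Θ = [[0, θ], [−θ, 0]]. The Gaussian f₀(x) = 2 e^{−(x₁² + x₂²)/θ} is idempotent for the Moyal product: (f₀ ⋆ f₀)(x) = f₀(x) for every x ∈ ℝ². -/

import Mathlib

open MeasureTheory Matrix

/-- The Gaussian `f₀(x) = 2 e^{−(x₁² + x₂²)/θ}` on the Moyal plane. -/
noncomputable def f0 (θ : ℝ) (x : Fin 2 → ℝ) : ℂ :=
  ((2 * Real.exp (-(x 0 ^ 2 + x 1 ^ 2) / θ) : ℝ) : ℂ)

lemma gauss1 {a : ℝ} (ha : 0 < a) (c d : ℂ) :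
    ∫ t : ℝ, Complex.exp (-(a:ℂ) * t ^ 2 + c * t + d)
      = ((Real.pi : ℂ) / a) ^ (1/2 : ℂ) * Complex.exp (d + c ^ 2 / (4 * a)) := by
  have hb : (-(a:ℂ)).re < 0 := by simpa using ha
  rw [integral_cexp_quadratic hb c d, neg_neg]
  congr 2
  have : (a:ℂ) ≠ 0 := by exact_mod_cast ha.ne'
  field_simp
  ring

lemma fin2_integral (F : (Fin 2 → ℝ) → ℂ) : ∫ v, F v = ∫ p : ℝ × ℝ, F ![p.1, p.2] := by
  rw [← ((volume_preserving_finTwoArrow ℝ).symm).integral_comp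
    (MeasurableEquiv.measurableEmbedding _) F]
  rfl

lemma hsq {a : ℝ} (ha : 0 < a) :
    ((Real.pi:ℂ)/a)^(1/2:ℂ) * ((Real.pi:ℂ)/a)^(1/2:ℂ) = (Real.pi:ℂ)/a := by
  rw [← Complex.cpow_add _ _ (div_ne_zero (by exact_mod_cast Real.pi_ne_zero)
    (by exact_mod_cast ha.ne'))]
  norm_num

lemma inner_eval (θ : ℝ) (hθ : 0 < θ) (x : Fin 2 → ℝ) (k : Fin 2 → ℝ) :
    (∫ y : Fin 2 → ℝ, f0 θ (x + y) * Complex.exp (Complex.I * ((∑ i, k i * y i : ℝ) : ℂ)))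
      = (2 * ((Real.pi:ℂ) * θ)) *
        Complex.exp ((-(θ:ℂ) * (k 0:ℝ)^2/4 - Complex.I * (k 0:ℝ) * (x 0:ℝ))
          + (-(θ:ℂ) * (k 1:ℝ)^2/4 - Complex.I * (k 1:ℝ) * (x 1:ℝ))) := by
  have hθc : (θ:ℂ) ≠ 0 := Complex.ofReal_ne_zero.2 hθ.ne'
  have hθi : (0:ℝ) < θ⁻¹ := inv_pos.2 hθ
  rw [fin2_integral (fun y => f0 θ (x + y) * Complex.exp (Complex.I * ((∑ i, k i * y i : ℝ) : ℂ)))]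
  have hpt : ∀ p : ℝ × ℝ,
      f0 θ (x + ![p.1, p.2]) * Complex.exp (Complex.I * ((∑ i, k i * ![p.1, p.2] i : ℝ) : ℂ))
      = 2 * (Complex.exp (-(↑(θ⁻¹):ℂ) * p.1 ^ 2 + (Complex.I * k 0 - 2 * x 0/θ) * p.1 + (-(x 0:ℂ)^2/θ))
        * Complex.exp (-(↑(θ⁻¹):ℂ) * p.2 ^ 2 + (Complex.I * k 1 - 2 * x 1/θ) * p.2 + (-(x 1:ℂ)^2/θ))) := by
    intro p
    simp only [f0, Fin.sum_univ_two, Pi.add_apply, Matrix.cons_val_zero, Matrix.cons_val_one,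
      Matrix.head_cons]
    push_cast
    rw [mul_assoc, ← Complex.exp_add, ← Complex.exp_add]
    congr 2
    field_simp
    ring
  simp_rw [hpt]
  rw [MeasureTheory.integral_const_mul, MeasureTheory.Measure.volume_eq_prod,
    MeasureTheory.integral_prod_mul
      (fun t : ℝ => Complex.exp (-(↑(θ⁻¹):ℂ) * t ^ 2 + (Complex.I * k 0 - 2 * x 0/θ) * t + (-(x 0:ℂ)^2/θ)))
      (fun t : ℝ => Complex.exp (-(↑(θ⁻¹):ℂ) * t ^ 2 + (Complex.I * k 1 - 2 * x 1/θ) * t + (-(x 1:ℂ)^2/θ))),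
    gauss1 hθi, gauss1 hθi, mul_mul_mul_comm, hsq hθi, ← Complex.exp_add,
    show ((Real.pi:ℂ)/↑(θ⁻¹)) = (Real.pi:ℂ) * θ from by push_cast; field_simp,
    ← mul_assoc]
  congr 1
  congr 1
  push_cast
  field_simp
  linear_combination ((θ:ℂ)^2*((k 0:ℝ):ℂ)^2 + (θ:ℂ)^2*((k 1:ℝ):ℂ)^2) * Complex.I_sq

/-- `f₀` is idempotent for the Moyal product with `Θ = [[0, θ], [−θ, 0]]`:
`(f₀ ⋆ f₀)(x) = f₀(x)` for every `x ∈ ℝ²`. -/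
theorem stmt7 (θ : ℝ) (hθ : 0 < θ) (x : Fin 2 → ℝ) :
    (((2 * Real.pi) ^ 2)⁻¹ : ℝ) •
      (∫ k : Fin 2 → ℝ, ∫ y : Fin 2 → ℝ,
        f0 θ (x + (2⁻¹ : ℝ) •
            Matrix.mulVec (!![0, θ; -θ, 0] : Matrix (Fin 2) (Fin 2) ℝ) k) *
          f0 θ (x + y) *
          Complex.exp (Complex.I * ((∑ i, k i * y i : ℝ) : ℂ)))
      = f0 θ x := by
  have hθc : (θ:ℂ) ≠ 0 := Complex.ofReal_ne_zero.2 hθ.ne'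
  have hθ2 : (0:ℝ) < θ/2 := by positivity
  simp_rw [mul_assoc, MeasureTheory.integral_const_mul, inner_eval θ hθ x]
  have hpt2 : ∀ k : Fin 2 → ℝ,
      f0 θ (x + (2⁻¹ : ℝ) • Matrix.mulVec (!![0, θ; -θ, 0] : Matrix (Fin 2) (Fin 2) ℝ) k) *
        ((2 * ((Real.pi:ℂ) * θ)) *
          Complex.exp ((-(θ:ℂ) * (k 0:ℝ)^2/4 - Complex.I * (k 0:ℝ) * (x 0:ℝ))
            + (-(θ:ℂ) * (k 1:ℝ)^2/4 - Complex.I * (k 1:ℝ) * (x 1:ℝ))))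
      = (4*(Real.pi:ℂ)*θ) *
        (Complex.exp (-(↑(θ/2):ℂ) * (k 0:ℝ) ^ 2 + ((x 1:ℂ) - Complex.I * x 0) * (k 0:ℝ) + (-(x 0:ℂ)^2/θ))
          * Complex.exp (-(↑(θ/2):ℂ) * (k 1:ℝ) ^ 2 + (-(x 0:ℂ) - Complex.I * x 1) * (k 1:ℝ) + (-(x 1:ℂ)^2/θ))) := by
    intro k
    simp only [f0, Pi.add_apply, Pi.smul_apply, smul_eq_mul, Matrix.mulVec, dotProduct,
      Fin.sum_univ_two, Matrix.cons_val', Matrix.cons_val_zero, Matrix.cons_val_one,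
      Matrix.head_cons, Matrix.of_apply, Matrix.empty_val', Matrix.cons_val_fin_one,
      Matrix.head_fin_const]
    push_cast
    rw [mul_mul_mul_comm, ← Complex.exp_add, ← Complex.exp_add]
    congr 1
    · ring
    · congr 1
      field_simp
      ring
  simp_rw [hpt2]
  rw [MeasureTheory.integral_const_mul,
    fin2_integral (fun k => Complex.exp (-(↑(θ/2):ℂ) * (k 0:ℝ) ^ 2 + ((x 1:ℂ) - Complex.I * x 0) * (k 0:ℝ) + (-(x 0:ℂ)^2/θ))
      * Complex.exp (-(↑(θ/2):ℂ) * (k 1:ℝ) ^ 2 + (-(x 0:ℂ) - Complex.I * x 1) * (k 1:ℝ) + (-(x 1:ℂ)^2/θ)))]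
  simp only [Matrix.cons_val_zero, Matrix.cons_val_one, Matrix.head_cons]
  rw [MeasureTheory.Measure.volume_eq_prod, MeasureTheory.integral_prod_mul
      (fun t : ℝ => Complex.exp (-(↑(θ/2):ℂ) * t ^ 2 + ((x 1:ℂ) - Complex.I * x 0) * t + (-(x 0:ℂ)^2/θ)))
      (fun t : ℝ => Complex.exp (-(↑(θ/2):ℂ) * t ^ 2 + (-(x 0:ℂ) - Complex.I * x 1) * t + (-(x 1:ℂ)^2/θ))),
    gauss1 hθ2, gauss1 hθ2,
    mul_mul_mul_comm (((Real.pi:ℂ)/↑(θ/2)) ^ (1/2:ℂ))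
      (Complex.exp (-(x 0:ℂ)^2/θ + ((x 1:ℂ) - Complex.I * x 0) ^ 2 / (4 * ↑(θ/2))))
      (((Real.pi:ℂ)/↑(θ/2)) ^ (1/2:ℂ))
      (Complex.exp (-(x 1:ℂ)^2/θ + (-(x 0:ℂ) - Complex.I * x 1) ^ 2 / (4 * ↑(θ/2)))),
    hsq hθ2, ← Complex.exp_add,
    show (-(x 0:ℂ)^2/θ + ((x 1:ℂ) - Complex.I * x 0) ^ 2 / (4 * ↑(θ/2)))
      + (-(x 1:ℂ)^2/θ + (-(x 0:ℂ) - Complex.I * x 1) ^ 2 / (4 * ↑(θ/2)))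
      = ((-(x 0 ^ 2 + x 1 ^ 2)/θ : ℝ) : ℂ) from by
        push_cast
        field_simp
        linear_combination (2*(((x 0:ℝ):ℂ)^2 + ((x 1:ℝ):ℂ)^2)) * Complex.I_sq]
  simp only [f0, Complex.real_smul]
  push_cast
  have hπ : (Real.pi:ℂ) ≠ 0 := Complex.ofReal_ne_zero.2 Real.pi_ne_zero
  field_simp
  ring
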